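/- For d ≥ 3, K ∈ (ℕ≥2 ∪ {∞})^d, and any permutation σ of {1,...,d}, the group with presentation ⟨a_1,...,a_d | a_i^{k_i} = 1 (if k_i < ∞), a_1⋯a_d = 1⟩ is isomorphic to the group with the same presentation where k_i is replaced by k_{σ(i)}. -/

import Mathlib

/-- Relators for the presentation `⟨a_1,…,a_d ∣ a_i^{k_i} = 1 (k_i < ∞), a_1 a_2 ⋯ a_d = 1⟩`,
where `k i = 0` encodes `k_i = ∞`. -/
def altRels (d : ℕ) (k : Fin d → ℕ) : Set (FreeGroup (Fin d)) :=
  {r | (∃ i, r = FreeGroup.of i ^ k i) ∨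
    r = (List.ofFn (fun i : Fin d => FreeGroup.of i)).prod}

open Subgroup FreeGroup

/-- Presented groups with relator sets carried to each other by an automorphism of the free
group are isomorphic. -/
noncomputable def presentedCongr {α : Type*} {r1 r2 : Set (FreeGroup α)}
    (e : FreeGroup α ≃* FreeGroup α)
    (h1 : ∀ r ∈ r1, e r ∈ Subgroup.normalClosure r2)
    (h2 : ∀ r ∈ r2, e.symm r ∈ Subgroup.normalClosure r1) :
    PresentedGroup r1 ≃* PresentedGroup r2 :=
  QuotientGroup.congr _ _ e (by
    apply le_antisymm
    · rw [Subgroup.map_le_iff_le_comap]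
      haveI : ((Subgroup.normalClosure r2).comap (e : FreeGroup α →* FreeGroup α)).Normal :=
        Subgroup.Normal.comap (normalClosure_normal) _
      exact normalClosure_le_normal h1
    · haveI : ((Subgroup.normalClosure r1).map (e : FreeGroup α →* FreeGroup α)).Normal := by
        apply Subgroup.Normal.map _ _ (MulEquiv.surjective e)
        exact normalClosure_normal
      apply normalClosure_le_normal
      intro r hr
      exact ⟨e.symm r, h2 r hr, by simp⟩)

lemma fin_zero_sub_one (n : ℕ) : (0 : Fin (n+3)) - 1 = Fin.last (n+2) := by
  rw [eq_comm, eq_sub_iff_add_eq, Fin.last_add_one]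

lemma fin_succ_sub_one {n : ℕ} (i : Fin (n+2)) : (Fin.succ i) - 1 = Fin.castSucc i := by
  rw [eq_comm, eq_sub_iff_add_eq, Fin.coeSucc_eq_succ]

lemma rot_iso (n : ℕ) (k : Fin (n+3) → ℕ) :
    Nonempty (PresentedGroup (altRels (n+3) k) ≃*
      PresentedGroup (altRels (n+3) (k ∘ finRotate (n+3)))) := by
  set c : Equiv.Perm (Fin (n+3)) := finRotate (n+3) with hc
  have hcinv : ∀ i : Fin (n+3), c⁻¹ i = i - 1 := by
    intro i
    rw [Equiv.Perm.inv_eq_iff_eq, hc, finRotate_succ_apply, sub_add_cancel]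
  have hsymm : ∀ i : Fin (n+3), (Equiv.symm c⁻¹) i = i + 1 := by
    intro i
    rw [show (c⁻¹ : Equiv.Perm (Fin (n+3))) = Equiv.symm c from rfl, Equiv.symm_symm,
      hc, finRotate_succ_apply]
  refine ⟨presentedCongr (freeGroupCongr (c⁻¹ : Equiv.Perm (Fin (n+3)))) ?_ ?_⟩
  · rintro r (⟨i, rfl⟩ | rfl)
    · apply Subgroup.subset_normalClosure
      refine Or.inl ⟨c⁻¹ i, ?_⟩
      simp [map_pow, Function.comp_def, Equiv.apply_symm_apply]
    · rw [map_list_prod, List.map_ofFn]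
      have key : (List.ofFn (⇑(freeGroupCongr (c⁻¹ : Equiv.Perm (Fin (n+3)))) ∘
            fun i : Fin (n+3) => FreeGroup.of i)).prod
          = FreeGroup.of (Fin.last (n+2)) *
            (List.ofFn fun i : Fin (n+3) => (FreeGroup.of i : FreeGroup (Fin (n+3)))).prod *
            (FreeGroup.of (Fin.last (n+2)))⁻¹ := by
        simp only [Function.comp_def, freeGroupCongr_apply, FreeGroup.map.of, hcinv]
        rw [List.ofFn_succ (f := fun i : Fin (n+3) => FreeGroup.of (i - 1)),
          List.ofFn_succ' (fun i : Fin (n+3) => (FreeGroup.of i : FreeGroup (Fin (n+3))))]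
        simp only [fin_zero_sub_one, fin_succ_sub_one, List.prod_cons, List.prod_concat,
          List.concat_eq_append, List.prod_append]
        group
        simp [mul_assoc]
      rw [key]
      have hm : (List.ofFn fun i : Fin (n+3) => (FreeGroup.of i : FreeGroup (Fin (n+3)))).prod
          ∈ altRels (n+3) (k ∘ ⇑c) := Or.inr rfl
      exact Subgroup.normalClosure_normal.conj_mem _ (Subgroup.subset_normalClosure hm) _
  · rintro r (⟨i, rfl⟩ | rfl)
    · apply Subgroup.subset_normalClosure
      refine Or.inl ⟨c i, ?_⟩
      simp only [map_pow, freeGroupCongr_symm, freeGroupCongr_apply, FreeGroup.map.of,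
        Function.comp_apply, Equiv.Perm.inv_def, Equiv.symm_symm]
    · rw [map_list_prod, List.map_ofFn]
      have key : (List.ofFn (⇑((freeGroupCongr (c⁻¹ : Equiv.Perm (Fin (n+3)))).symm) ∘
            fun i : Fin (n+3) => FreeGroup.of i)).prod
          = (FreeGroup.of (0 : Fin (n+3)))⁻¹ *
            (List.ofFn fun i : Fin (n+3) => (FreeGroup.of i : FreeGroup (Fin (n+3)))).prod *
            ((FreeGroup.of (0 : Fin (n+3)))⁻¹)⁻¹ := by
        simp only [Function.comp_def, freeGroupCongr_symm, freeGroupCongr_apply, FreeGroup.map.of,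
          hsymm]
        rw [List.ofFn_succ' (fun i : Fin (n+3) => FreeGroup.of (i + 1)),
          List.ofFn_succ (f := fun i : Fin (n+3) => (FreeGroup.of i : FreeGroup (Fin (n+3))))]
        simp only [Fin.coeSucc_eq_succ, Fin.last_add_one, List.prod_cons, List.prod_concat,
          List.concat_eq_append, List.prod_append]
        group
        simp [mul_assoc]
      rw [key]
      have hm : (List.ofFn fun i : Fin (n+3) => (FreeGroup.of i : FreeGroup (Fin (n+3)))).prod
          ∈ altRels (n+3) k := Or.inr rfl
      exact Subgroup.normalClosure_normal.conj_mem _ (Subgroup.subset_normalClosure hm) _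

lemma ofFn_peel2 {n : ℕ} {G : Type*} [Monoid G] (h : Fin (n+3) → G) :
    (List.ofFn h).prod = h 0 * (h 1 * (List.ofFn fun i : Fin (n+1) => h i.succ.succ).prod) := by
  rw [List.ofFn_succ (f := h), List.ofFn_succ (f := fun i : Fin (n+2) => h i.succ)]
  simp [List.prod_cons, Fin.succ_zero_eq_one]

lemma swap_iso (n : ℕ) (k : Fin (n+3) → ℕ) :
    Nonempty (PresentedGroup (altRels (n+3) k) ≃*
      PresentedGroup (altRels (n+3) (k ∘ Equiv.swap 0 1))) := by
  classical
  set f : Fin (n+3) → FreeGroup (Fin (n+3)) := fun i =>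
    if i = 0 then FreeGroup.of 0 * FreeGroup.of 1 * (FreeGroup.of 0)⁻¹
    else if i = 1 then FreeGroup.of 0 else FreeGroup.of i with hf
  set g : Fin (n+3) → FreeGroup (Fin (n+3)) := fun i =>
    if i = 0 then FreeGroup.of 1
    else if i = 1 then (FreeGroup.of 1)⁻¹ * FreeGroup.of 0 * FreeGroup.of 1
    else FreeGroup.of i with hg
  have h01 : (0 : Fin (n+3)) ≠ 1 := by simp [Fin.ext_iff]
  have hf0 : f 0 = FreeGroup.of 0 * FreeGroup.of 1 * (FreeGroup.of 0)⁻¹ := by simp [hf]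
  have hf1 : f 1 = FreeGroup.of 0 := by simp [hf, Ne.symm h01]
  have hfo : ∀ i, i ≠ 0 → i ≠ 1 → f i = FreeGroup.of i := by
    intro i h h'; simp [hf, h, h']
  have hg0 : g 0 = FreeGroup.of 1 := by simp [hg]
  have hg1 : g 1 = (FreeGroup.of 1)⁻¹ * FreeGroup.of 0 * FreeGroup.of 1 := by
    simp [hg, Ne.symm h01]
  have hgo : ∀ i, i ≠ 0 → i ≠ 1 → g i = FreeGroup.of i := by
    intro i h h'; simp [hg, h, h']
  have hne0 : ∀ i : Fin (n+1), (i.succ.succ : Fin (n+3)) ≠ 0 := fun i => Fin.succ_ne_zero _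
  have hne1 : ∀ i : Fin (n+1), (i.succ.succ : Fin (n+3)) ≠ 1 := by
    intro i h
    rw [← Fin.succ_zero_eq_one] at h
    exact Fin.succ_ne_zero _ (Fin.succ_injective _ h)
  have hgf : (FreeGroup.lift g).comp (FreeGroup.lift f) = MonoidHom.id _ := by
    apply FreeGroup.ext_hom; intro a
    simp only [MonoidHom.comp_apply, MonoidHom.id_apply, FreeGroup.lift_apply_of]
    by_cases ha : a = 0
    · subst ha
      rw [hf0]
      simp only [_root_.map_mul, _root_.map_inv, FreeGroup.lift_apply_of, hg0, hg1]
      group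
    · by_cases ha1 : a = 1
      · subst ha1
        rw [hf1, FreeGroup.lift_apply_of, hg0]
      · rw [hfo a ha ha1, FreeGroup.lift_apply_of, hgo a ha ha1]
  have hfg : (FreeGroup.lift f).comp (FreeGroup.lift g) = MonoidHom.id _ := by
    apply FreeGroup.ext_hom; intro a
    simp only [MonoidHom.comp_apply, MonoidHom.id_apply, FreeGroup.lift_apply_of]
    by_cases ha : a = 0
    · subst ha
      rw [hg0, FreeGroup.lift_apply_of, hf1]
    · by_cases ha1 : a = 1
      · subst ha1
        rw [hg1]
        simp only [_root_.map_mul, _root_.map_inv, FreeGroup.lift_apply_of, hf0, hf1]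
        group
      · rw [hgo a ha ha1, FreeGroup.lift_apply_of, hfo a ha ha1]
  set e : FreeGroup (Fin (n+3)) ≃* FreeGroup (Fin (n+3)) :=
    MonoidHom.toMulEquiv (FreeGroup.lift f) (FreeGroup.lift g) hgf hfg with he
  have heapp : ∀ x, e x = FreeGroup.lift f x := fun _ => rfl
  have hesymm : ∀ x, e.symm x = FreeGroup.lift g x := fun _ => rfl
  refine ⟨presentedCongr e ?_ ?_⟩
  · rintro r (⟨i, rfl⟩ | rfl)
    · rw [heapp, map_pow, FreeGroup.lift_apply_of]
      by_cases hi : i = 0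
      · subst hi
        rw [hf0, conj_pow]
        have hm : FreeGroup.of (1 : Fin (n+3)) ^ ((k ∘ Equiv.swap 0 1) 1)
            ∈ altRels (n+3) (k ∘ Equiv.swap 0 1) := Or.inl ⟨1, rfl⟩
        rw [Function.comp_apply, Equiv.swap_apply_right] at hm
        exact Subgroup.normalClosure_normal.conj_mem _
          (Subgroup.subset_normalClosure hm) _
      · by_cases hi1 : i = 1
        · subst hi1
          apply Subgroup.subset_normalClosure
          refine Or.inl ⟨0, ?_⟩
          rw [hf1, Function.comp_apply, Equiv.swap_apply_left]
        · apply Subgroup.subset_normalClosure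
          refine Or.inl ⟨i, ?_⟩
          rw [hfo i hi hi1, Function.comp_apply, Equiv.swap_apply_of_ne_of_ne hi hi1]
    · rw [heapp, map_list_prod, List.map_ofFn]
      apply Subgroup.subset_normalClosure
      refine Or.inr ?_
      rw [ofFn_peel2 (⇑(FreeGroup.lift f) ∘ fun i : Fin (n+3) => FreeGroup.of i),
        ofFn_peel2 (fun i : Fin (n+3) => (FreeGroup.of i : FreeGroup (Fin (n+3))))]
      have hrest : (List.ofFn fun i : Fin (n+1) =>
            ((⇑(FreeGroup.lift f) ∘ fun j : Fin (n+3) => FreeGroup.of j) i.succ.succ)).prod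
          = (List.ofFn fun i : Fin (n+1) =>
            (FreeGroup.of (i.succ.succ) : FreeGroup (Fin (n+3)))).prod := by
        refine congrArg List.prod (congrArg List.ofFn ?_)
        funext i
        simp only [Function.comp_apply, FreeGroup.lift_apply_of, hfo _ (hne0 i) (hne1 i)]
      rw [hrest]
      simp only [Function.comp_apply, FreeGroup.lift_apply_of, hf0, hf1]
      group
  · rintro r (⟨i, rfl⟩ | rfl)
    · rw [hesymm, map_pow, FreeGroup.lift_apply_of]
      by_cases hi : i = 0
      · subst hi
        rw [hg0, Function.comp_apply, Equiv.swap_apply_left]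
        have hm : FreeGroup.of (1 : Fin (n+3)) ^ k 1 ∈ altRels (n+3) k := Or.inl ⟨1, rfl⟩
        exact Subgroup.subset_normalClosure hm
      · by_cases hi1 : i = 1
        · subst hi1
          rw [hg1, Function.comp_apply, Equiv.swap_apply_right]
          have : ((FreeGroup.of (1 : Fin (n+3)))⁻¹ * FreeGroup.of 0 * FreeGroup.of 1) ^ k 0
              = (FreeGroup.of (1 : Fin (n+3)))⁻¹ * (FreeGroup.of (0 : Fin (n+3))) ^ k 0 *
                ((FreeGroup.of (1 : Fin (n+3)))⁻¹)⁻¹ := by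
            rw [← conj_pow, inv_inv]
          rw [this]
          have hm : FreeGroup.of (0 : Fin (n+3)) ^ k 0 ∈ altRels (n+3) k := Or.inl ⟨0, rfl⟩
          exact Subgroup.normalClosure_normal.conj_mem _
            (Subgroup.subset_normalClosure hm) _
        · rw [hgo i hi hi1, Function.comp_apply, Equiv.swap_apply_of_ne_of_ne hi hi1]
          have hm : FreeGroup.of i ^ k i ∈ altRels (n+3) k := Or.inl ⟨i, rfl⟩
          exact Subgroup.subset_normalClosure hm
    · rw [hesymm, map_list_prod, List.map_ofFn]
      apply Subgroup.subset_normalClosure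
      refine Or.inr ?_
      rw [ofFn_peel2 (⇑(FreeGroup.lift g) ∘ fun i : Fin (n+3) => FreeGroup.of i),
        ofFn_peel2 (fun i : Fin (n+3) => (FreeGroup.of i : FreeGroup (Fin (n+3))))]
      have hrest : (List.ofFn fun i : Fin (n+1) =>
            ((⇑(FreeGroup.lift g) ∘ fun j : Fin (n+3) => FreeGroup.of j) i.succ.succ)).prod
          = (List.ofFn fun i : Fin (n+1) =>
            (FreeGroup.of (i.succ.succ) : FreeGroup (Fin (n+3)))).prod := by
        refine congrArg List.prod (congrArg List.ofFn ?_)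
        funext i
        simp only [Function.comp_apply, FreeGroup.lift_apply_of, hgo _ (hne0 i) (hne1 i)]
      rw [hrest]
      simp only [Function.comp_apply, FreeGroup.lift_apply_of, hg0, hg1]
      group

/-- For `d ≥ 3`, `K ∈ (ℕ≥2 ∪ {∞})^d` and any permutation `σ` of the indices,
the group `⟨a_1,…,a_d ∣ a_i^{k_i} = 1 (k_i < ∞), a_1⋯a_d = 1⟩` is isomorphic to the group with
the same presentation with `k_i` replaced by `k_{σ(i)}`. -/
theorem stmt1 (d : ℕ) (hd : 3 ≤ d) (k : Fin d → ℕ) (hk : ∀ i, k i ≠ 1)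
    (σ : Equiv.Perm (Fin d)) :
    Nonempty (PresentedGroup (altRels d k) ≃* PresentedGroup (altRels d (k ∘ σ))) := by
  obtain ⟨n, rfl⟩ : ∃ n, d = n + 3 := ⟨d - 3, by omega⟩
  set H : Subgroup (Equiv.Perm (Fin (n+3))) :=
    { carrier := {τ | ∀ k' : Fin (n+3) → ℕ,
        Nonempty (PresentedGroup (altRels (n+3) k') ≃*
          PresentedGroup (altRels (n+3) (k' ∘ τ)))}
      one_mem' := by
        intro k'
        have : k' ∘ ⇑(1 : Equiv.Perm (Fin (n+3))) = k' := by
          funext i; simp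
        rw [this]
        exact ⟨MulEquiv.refl _⟩
      mul_mem' := by
        intro a b ha hb k'
        obtain ⟨A⟩ := ha k'
        obtain ⟨B⟩ := hb (k' ∘ ⇑a)
        have hE : k' ∘ ⇑(a * b) = (k' ∘ ⇑a) ∘ ⇑b := by
          funext i; simp [Equiv.Perm.mul_apply]
        rw [hE]
        exact ⟨A.trans B⟩
      inv_mem' := by
        intro a ha k'
        obtain ⟨A⟩ := ha (k' ∘ ⇑a⁻¹)
        have hE : (k' ∘ ⇑a⁻¹) ∘ ⇑a = k' := by
          funext i; simp
        rw [hE] at A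
        exact ⟨A.symm⟩ } with hH
  have hgen : Subgroup.closure
      ({finRotate (n+3), Equiv.swap 0 (finRotate (n+3) 0)} : Set (Equiv.Perm (Fin (n+3)))) ≤ H := by
    rw [Subgroup.closure_le]
    rintro τ (rfl | rfl)
    · exact fun k' => rot_iso n k'
    · have h1 : finRotate (n+3) 0 = 1 := by
        rw [finRotate_succ_apply, zero_add]
      rw [h1]
      exact fun k' => swap_iso n k'
  have htop : σ ∈ Subgroup.closure
      ({finRotate (n+3), Equiv.swap 0 (finRotate (n+3) 0)} : Set (Equiv.Perm (Fin (n+3)))) := by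
    rw [Equiv.Perm.closure_cycle_adjacent_swap isCycle_finRotate support_finRotate 0]
    trivial
  exact hgen htop k
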